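/- Let K ≥ 2 and 0 ≤ δ < 1, and suppose the erasure events of the K users are i.i.d. with per-user erasure probability δ, so that δ_A = δ^{|A|} and φ_{F,T} = δ^{|F|}(1-δ)^{|T|}. Define μ recursively by μ_{{k}} = m for all k (some m > 0), and μ_J = Σ_{I : k*∈I⊊J} [δ^{K-j+1}(1-δ)^{j-i} / (1 - δ^{K-j+1})] μ_I for |J| = j ≥ 2 with i = |I| and k* = min J. Then for every k and every W with k ∈ W ⊆ {k,…,K} and |W| = w: Σ_{I : k∈I⊆W} μ_I = (1 - δ^K) m / (1 - δ^{K-w+1}). -/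

import Mathlib

open Finset

/-- Counting lemma: a sum over subsets of `J` containing `a`, of a function of the
cardinality, as a numeric binomial sum. -/
lemma count_subsets {α : Type*} [DecidableEq α] {J : Finset α} {a : α} (ha : a ∈ J)
    (F : ℕ → ℝ) :
    ∑ I ∈ J.powerset.filter (fun I => a ∈ I), F I.card
      = ∑ s ∈ Finset.range J.card, ((J.card - 1).choose s : ℝ) * F (s + 1) := by
  have h1 : ∑ I ∈ J.powerset.filter (fun I => a ∈ I), F I.card
      = ∑ t ∈ (J.erase a).powerset, F (t.card + 1) := by
    refine Finset.sum_bij' (fun I _ => I.erase a) (fun t _ => insert a t) ?_ ?_ ?_ ?_ ?_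
    · intro I hI
      simp only [mem_filter, mem_powerset] at hI
      exact mem_powerset.2 (erase_subset_erase a hI.1)
    · intro t ht
      simp only [mem_powerset] at ht
      simp only [mem_filter, mem_powerset]
      refine ⟨insert_subset ha (ht.trans (erase_subset a J)), mem_insert_self a t⟩
    · intro I hI
      simp only [mem_filter] at hI
      exact insert_erase hI.2
    · intro t ht
      simp only [mem_powerset] at ht
      exact erase_insert (fun hat => (mem_erase.1 (ht hat)).1 rfl)
    · intro I hI
      simp only [mem_filter] at hI
      rw [card_erase_of_mem hI.2]
      congr 1
      have : 1 ≤ I.card := card_pos.2 ⟨a, hI.2⟩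
      omega
  rw [h1, Finset.sum_powerset_apply_card (fun n => F (n + 1)), card_erase_of_mem ha]
  have hJ1 : 1 ≤ J.card := card_pos.2 ⟨a, ha⟩
  have : J.card - 1 + 1 = J.card := by omega
  rw [this]
  refine Finset.sum_congr rfl fun s _ => ?_
  rw [nsmul_eq_mul]

/-- Trinomial revision / binomial-transform composition identity. -/

lemma trinomial_sum (g : ℕ → ℝ) (x : ℝ) (w : ℕ) (hw : 1 ≤ w) :
    ∑ v ∈ Finset.Icc 1 w, x ^ (w - v) * ((w - 1).choose (v - 1) : ℝ)
        * ∑ s ∈ Finset.range v, ((v - 1).choose s : ℝ) * g (s + 1)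
      = ∑ s ∈ Finset.range w, ((w - 1).choose s : ℝ) * (1 + x) ^ (w - 1 - s) * g (s + 1) := by
  rw [← Finset.Ico_add_one_right_eq_Icc, Finset.sum_Ico_eq_sum_range]
  have hw1 : w + 1 - 1 = w := by omega
  rw [hw1]
  have step1 : ∀ u ∈ Finset.range w,
      x ^ (w - (1 + u)) * ((w - 1).choose (1 + u - 1) : ℝ)
        * ∑ s ∈ Finset.range (1 + u), (((1 + u) - 1).choose s : ℝ) * g (s + 1)
      = ∑ s ∈ Finset.range w, x ^ (w - 1 - u) * ((w - 1).choose u : ℝ)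
          * ((u.choose s : ℝ) * g (s + 1)) := by
    intro u hu
    rw [Finset.mem_range] at hu
    have h1 : 1 + u - 1 = u := by omega
    have h2 : w - (1 + u) = w - 1 - u := by omega
    rw [h1, h2, Finset.mul_sum]
    refine Finset.sum_subset ?_ ?_
    · intro s hs
      rw [Finset.mem_range] at hs ⊢
      omega
    · intro s hs hs'
      rw [Finset.mem_range] at hs hs'
      simp [Nat.choose_eq_zero_of_lt (show u < s by omega)]
  rw [Finset.sum_congr rfl step1, Finset.sum_comm]
  refine Finset.sum_congr rfl fun s hs => ?_
  rw [Finset.mem_range] at hs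
  -- inner sum over u
  have restrict : ∑ u ∈ Finset.range w,
      x ^ (w - 1 - u) * ((w - 1).choose u : ℝ) * ((u.choose s : ℝ) * g (s + 1))
      = ∑ u ∈ Finset.Ico s w,
      x ^ (w - 1 - u) * ((w - 1).choose u : ℝ) * ((u.choose s : ℝ) * g (s + 1)) := by
    refine (Finset.sum_subset ?_ ?_).symm
    · intro u hu
      rw [Finset.mem_Ico] at hu
      rw [Finset.mem_range]
      exact hu.2
    · intro u hu hu'
      rw [Finset.mem_range] at hu
      rw [Finset.mem_Ico] at hu'
      simp [Nat.choose_eq_zero_of_lt (show u < s by omega)]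
  rw [restrict, Finset.sum_Ico_eq_sum_range]
  have key : ∀ t ∈ Finset.range (w - s),
      x ^ (w - 1 - (s + t)) * (((w - 1).choose (s + t)) : ℝ) * (((s + t).choose s : ℝ) * g (s + 1))
      = ((w - 1).choose s : ℝ) * g (s + 1)
          * (x ^ ((w - 1 - s) - t) * (((w - 1 - s).choose t) : ℝ)) := by
    intro t ht
    rw [Finset.mem_range] at ht
    have hc := Nat.choose_mul (n := w - 1) (k := s + t) (s := s) (by omega)
    have h3 : s + t - s = t := by omega
    rw [h3] at hc
    have hcast : (((w - 1).choose (s + t)) : ℝ) * (((s + t).choose s) : ℝ)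
        = (((w - 1).choose s) : ℝ) * (((w - 1 - s).choose t) : ℝ) := by
      rw [← Nat.cast_mul, ← Nat.cast_mul, hc]
    have h4 : w - 1 - (s + t) = w - 1 - s - t := by omega
    rw [h4]
    calc x ^ (w - 1 - s - t) * (((w - 1).choose (s + t)) : ℝ) * (((s + t).choose s : ℝ) * g (s + 1))
        = ((((w - 1).choose (s + t)) : ℝ) * (((s + t).choose s) : ℝ)) * (x ^ (w - 1 - s - t) * g (s + 1)) := by ring
      _ = ((((w - 1).choose s) : ℝ) * (((w - 1 - s).choose t) : ℝ)) * (x ^ (w - 1 - s - t) * g (s + 1)) := by rw [hcast]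
      _ = ((w - 1).choose s : ℝ) * g (s + 1) * (x ^ ((w - 1 - s) - t) * (((w - 1 - s).choose t) : ℝ)) := by ring
  rw [Finset.sum_congr rfl key, ← Finset.mul_sum]
  have hr : w - s = (w - 1 - s) + 1 := by omega
  rw [hr]
  have hbin : ∑ t ∈ Finset.range ((w - 1 - s) + 1),
      x ^ ((w - 1 - s) - t) * (((w - 1 - s).choose t) : ℝ) = (1 + x) ^ (w - 1 - s) := by
    rw [add_pow]
    refine Finset.sum_congr rfl fun t _ => ?_
    rw [one_pow]
    ring
  rw [hbin]
  ring

lemma alt_sum (w : ℕ) (hw : 2 ≤ w) :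
    ∑ v ∈ Finset.Icc 1 (w - 1), (-1 : ℝ) ^ (w - v) * ((w - 1).choose (v - 1) : ℝ) = -1 := by
  obtain ⟨n, rfl⟩ : ∃ n, w = n + 2 := ⟨w - 2, by omega⟩
  have h1 : n + 2 - 1 = n + 1 := by omega
  rw [h1, ← Finset.Ico_add_one_right_eq_Icc, Finset.sum_Ico_eq_sum_range]
  have h2 : n + 1 + 1 - 1 = n + 1 := by omega
  rw [h2]
  have hterm : ∀ i ∈ Finset.range (n + 1),
      (-1 : ℝ) ^ (n + 2 - (1 + i)) * ((n + 1).choose (1 + i - 1) : ℝ)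
        = (-1 : ℝ) ^ (n + 1 - i) * ((n + 1).choose i : ℝ) := by
    intro i hi
    have e1 : n + 2 - (1 + i) = n + 1 - i := by omega
    have e2 : 1 + i - 1 = i := by omega
    rw [e1, e2]
  rw [Finset.sum_congr rfl hterm]
  have hfull : ∑ i ∈ Finset.range (n + 2), (-1 : ℝ) ^ (n + 1 - i) * ((n + 1).choose i : ℝ)
      = 0 := by
    have h := add_pow (1 : ℝ) (-1) (n + 1)
    rw [show (1 : ℝ) + -1 = 0 from by ring, zero_pow (show n + 1 ≠ 0 by omega)] at h
    calc ∑ i ∈ Finset.range (n + 2), (-1 : ℝ) ^ (n + 1 - i) * ((n + 1).choose i : ℝ)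
        = ∑ i ∈ Finset.range (n + 1 + 1), (1 : ℝ) ^ i * (-1) ^ (n + 1 - i)
            * ((n + 1).choose i : ℝ) := by
          refine Finset.sum_congr rfl fun i _ => ?_
          rw [one_pow, one_mul]
      _ = 0 := h.symm
  rw [Finset.sum_range_succ] at hfull
  simp only [Nat.sub_self, pow_zero, Nat.choose_self, Nat.cast_one, mul_one, one_mul] at hfull
  linarith

noncomputable def gfun (K : ℕ) (μ : Finset (Fin K) → ℝ) (n : ℕ) : ℝ :=
  if h : 1 ≤ n ∧ n ≤ K then μ (Finset.Iic (⟨n - 1, by omega⟩ : Fin K)) else 0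

set_option maxHeartbeats 2000000 in
/-- Recursion lemma specialized to the spatially i.i.d. symmetric erasure BC
(`δ_A = δ^{|A|}`, `φ_{F,T} = δ^{|F|}(1-δ)^{|T|}`): if `μ_{{k}} = m` and
`μ_J = Σ_{k*∈I⊊J} [δ^{K-j+1}(1-δ)^{j-|I|}/(1-δ^{K-j+1})] μ_I` for `|J| = j ≥ 2`,
then `Σ_{k∈I⊆W} μ_I = (1-δ^K) m / (1-δ^{K-|W|+1})` for all `k ∈ W ⊆ {k,…,K}`. -/
theorem stmt19 (K : ℕ) (hK : 2 ≤ K) (δ : ℝ) (hδ0 : 0 ≤ δ) (hδ1 : δ < 1)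
    (m : ℝ) (hm : 0 < m) (μ : Finset (Fin K) → ℝ)
    (hμ1 : ∀ k : Fin K, μ {k} = m)
    (hμrec : ∀ (J : Finset (Fin K)) (hJ : 2 ≤ J.card),
      μ J = ∑ I ∈ J.powerset.filter
          (fun I => J.min' (Finset.card_pos.mp (by omega)) ∈ I ∧ I ≠ J),
        δ ^ (K - J.card + 1) * (1 - δ) ^ (J.card - I.card) /
          (1 - δ ^ (K - J.card + 1)) * μ I) :
    ∀ (k : Fin K) (W : Finset (Fin K)), k ∈ W → (∀ i ∈ W, k ≤ i) →
      ∑ I ∈ W.powerset.filter (fun I => k ∈ I), μ I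
        = (1 - δ ^ K) * m / (1 - δ ^ (K - W.card + 1)) := by
  intro k W hkW _hle
  classical
  set g : ℕ → ℝ := gfun K μ with hgdef
  have hcard_le : ∀ S : Finset (Fin K), S.card ≤ K := fun S => by
    simpa using Finset.card_le_univ S
  have hpow_lt : ∀ n : ℕ, 1 ≤ n → δ ^ n < 1 := fun n hn =>
    pow_lt_one₀ hδ0 hδ1 (by omega)
  have hgval : ∀ n, (h1 : 1 ≤ n) → (h2 : n ≤ K) →
      g n = μ (Finset.Iic (⟨n - 1, by omega⟩ : Fin K)) := by
    intro n h1 h2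
    rw [hgdef]
    simp only [gfun]
    rw [dif_pos ⟨h1, h2⟩]
  have hIic_card : ∀ n, (h1 : 1 ≤ n) → (h2 : n ≤ K) →
      (Finset.Iic (⟨n - 1, by omega⟩ : Fin K)).card = n := by
    intro n h1 h2
    rw [Fin.card_Iic]
    simp only [Fin.val_mk]
    omega
  have hg1 : ∀ J : Finset (Fin K), J.card = 1 → μ J = g 1 := by
    intro J hJ
    obtain ⟨a, rfl⟩ := Finset.card_eq_one.1 hJ
    rw [hgval 1 le_rfl (by omega)]
    obtain ⟨b, hb⟩ := Finset.card_eq_one.1 (hIic_card 1 le_rfl (by omega))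
    rw [hb, hμ1, hμ1]
  -- the recursion, reduced to a numeric identity
  have formula : ∀ (J : Finset (Fin K)) (h2 : 2 ≤ J.card),
      (∀ I ∈ J.powerset.filter
          (fun I => J.min' (Finset.card_pos.mp (by omega)) ∈ I ∧ I ≠ J),
        μ I = g I.card) →
      μ J = (∑ s ∈ Finset.range J.card, ((J.card - 1).choose s : ℝ) *
            (δ ^ (K - J.card + 1) * (1 - δ) ^ (J.card - (s + 1)) /
              (1 - δ ^ (K - J.card + 1)) * g (s + 1)))
          - δ ^ (K - J.card + 1) * (1 - δ) ^ (J.card - J.card) /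
              (1 - δ ^ (K - J.card + 1)) * g J.card := by
    intro J h2 hI
    have haJ : J.min' (Finset.card_pos.mp (by omega)) ∈ J := Finset.min'_mem _ _
    rw [hμrec J h2]
    rw [Finset.sum_congr rfl (fun I hIm => by rw [hI I hIm])]
    have hfilter : J.powerset.filter
        (fun I => J.min' (Finset.card_pos.mp (by omega)) ∈ I ∧ I ≠ J)
        = (J.powerset.filter
            (fun I => J.min' (Finset.card_pos.mp (by omega)) ∈ I)).erase J := by
      ext I
      simp only [Finset.mem_erase, Finset.mem_filter]
      tauto
    rw [hfilter, Finset.sum_erase_eq_sub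
        (by simp only [Finset.mem_filter, Finset.mem_powerset]
            exact ⟨Finset.Subset.refl J, haJ⟩)]
    rw [count_subsets haJ (fun i => δ ^ (K - J.card + 1) * (1 - δ) ^ (J.card - i) /
        (1 - δ ^ (K - J.card + 1)) * g i)]
  -- symmetry: μ depends only on the cardinality
  have hsym : ∀ n (J : Finset (Fin K)), J.card = n → 1 ≤ n → μ J = g n := by
    intro n
    induction n using Nat.strong_induction_on with
    | _ n IH =>
      intro J hJn h1
      rcases eq_or_lt_of_le h1 with h | h
      · subst h
        exact hg1 J hJn
      · have h2 : 2 ≤ n := h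
        have hnK : n ≤ K := hJn ▸ hcard_le J
        have hIlt : ∀ (J' : Finset (Fin K)) (hJ'n : J'.card = n),
            ∀ I ∈ J'.powerset.filter
              (fun I => J'.min' (Finset.card_pos.mp (by omega)) ∈ I ∧ I ≠ J'),
            μ I = g I.card := by
          intro J' hJ'n I hIm
          simp only [Finset.mem_filter, Finset.mem_powerset] at hIm
          obtain ⟨hsub, hmin, hne⟩ := hIm
          have hlt : I.card < n := hJ'n ▸ Finset.card_lt_card (ssubset_of_subset_of_ne hsub hne)
          have hge : 1 ≤ I.card := Finset.card_pos.2 ⟨_, hmin⟩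
          exact IH I.card hlt I rfl hge
        have hC : (Finset.Iic (⟨n - 1, by omega⟩ : Fin K)).card = n := hIic_card n h1 hnK
        have e1 := formula J (by omega) (hIlt J hJn)
        have e2 := formula _ (by rw [hC]; omega) (hIlt _ hC)
        simp only [hJn] at e1
        simp only [hC] at e2
        rw [e1, ← e2, ← hgval n h1 hnK]
  -- recursion for g in numeric form : g w = δ^(K-w+1) * A w
  have grec : ∀ w, 2 ≤ w → w ≤ K →
      g w = δ ^ (K - w + 1) *
        ∑ s ∈ Finset.range w, ((w - 1).choose s : ℝ) * (1 - δ) ^ (w - 1 - s) * g (s + 1) := by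
    intro w h2 hwK
    have h1 : 1 ≤ w := by omega
    have hC : (Finset.Iic (⟨w - 1, by omega⟩ : Fin K)).card = w := hIic_card w h1 hwK
    have hIlt : ∀ I ∈ (Finset.Iic (⟨w - 1, by omega⟩ : Fin K)).powerset.filter
          (fun I => (Finset.Iic (⟨w - 1, by omega⟩ : Fin K)).min'
            (Finset.card_pos.mp (by omega)) ∈ I ∧ I ≠ (Finset.Iic (⟨w - 1, by omega⟩ : Fin K))),
        μ I = g I.card := by
      intro I hIm
      simp only [Finset.mem_filter, Finset.mem_powerset] at hIm
      obtain ⟨hsub, hmin, hne⟩ := hIm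
      exact hsym I.card I rfl (Finset.card_pos.2 ⟨_, hmin⟩)
    have e2 := formula _ (by rw [hC]; omega) hIlt
    simp only [hC] at e2
    rw [← hgval w h1 hwK] at e2
    have hpa : (0:ℝ) < 1 - δ ^ (K - w + 1) := by
      have := hpow_lt (K - w + 1) (by omega)
      linarith
    have hrw : ∀ s ∈ Finset.range w, ((w - 1).choose s : ℝ) *
          (δ ^ (K - w + 1) * (1 - δ) ^ (w - (s + 1)) / (1 - δ ^ (K - w + 1)) * g (s + 1))
        = δ ^ (K - w + 1) / (1 - δ ^ (K - w + 1)) *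
            (((w - 1).choose s : ℝ) * (1 - δ) ^ (w - 1 - s) * g (s + 1)) := by
      intro s hs
      have : w - (s + 1) = w - 1 - s := by omega
      rw [this]
      ring
    rw [Finset.sum_congr rfl hrw, ← Finset.mul_sum] at e2
    set A := ∑ s ∈ Finset.range w, ((w - 1).choose s : ℝ) * (1 - δ) ^ (w - 1 - s) * g (s + 1)
      with hA
    have hww : w - w = 0 := by omega
    rw [hww, pow_zero] at e2
    -- e2 : g w = δ^a/(1-δ^a) * A - δ^a * 1 / (1-δ^a) * g w
    have hne : (1 : ℝ) - δ ^ (K - w + 1) ≠ 0 := ne_of_gt hpa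
    have e3 := congrArg (fun t => (1 - δ ^ (K - w + 1)) * t) e2
    simp only [mul_sub] at e3
    field_simp at e3
    linear_combination e3
  -- the main numeric induction
  have key : ∀ w, 1 ≤ w → w ≤ K →
      (∑ s ∈ Finset.range w, ((w - 1).choose s : ℝ) * g (s + 1))
        = (1 - δ ^ K) * m / (1 - δ ^ (K - w + 1)) := by
    have hg1m : g 1 = m := (hg1 {k} (Finset.card_singleton k)).symm.trans (hμ1 k)
    intro w
    induction w using Nat.strong_induction_on with
    | _ w IH =>
      intro h1 hwK
      rcases eq_or_lt_of_le h1 with h | h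
      · subst h
        have hKK : K - 1 + 1 = K := by omega
        have hne : (1 : ℝ) - δ ^ K ≠ 0 := ne_of_gt (by linarith [hpow_lt K (by omega)])
        rw [Finset.sum_range_one, hKK]
        norm_num
        rw [hg1m, eq_div_iff hne]
        ring
      · have h2 : 2 ≤ w := h
        have hpa : (0:ℝ) < 1 - δ ^ (K - w + 1) := by
          have := hpow_lt (K - w + 1) (by omega)
          linarith
        have split : ∀ F : ℕ → ℝ,
            (∑ v ∈ Finset.Icc 1 w, F v) = (∑ v ∈ Finset.Icc 1 (w - 1), F v) + F w := by
          intro F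
          have hw' : w - 1 + 1 = w := by omega
          rw [← hw', Finset.sum_Icc_succ_top (by omega)]
          simp
        have hIH1 : ∀ v ∈ Finset.Icc 1 (w - 1),
            (-1 : ℝ) ^ (w - v) * ((w - 1).choose (v - 1) : ℝ)
              * (∑ s ∈ Finset.range v, ((v - 1).choose s : ℝ) * g (s + 1))
            = (-1 : ℝ) ^ (w - v) * ((w - 1).choose (v - 1) : ℝ)
              * ((1 - δ ^ K) * m / (1 - δ ^ (K - v + 1))) := by
          intro v hv
          rw [Finset.mem_Icc] at hv
          rw [IH v (by omega) (by omega) (by omega)]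
        have hIH2 : ∀ v ∈ Finset.Icc 1 (w - 1),
            (-δ) ^ (w - v) * ((w - 1).choose (v - 1) : ℝ)
              * (∑ s ∈ Finset.range v, ((v - 1).choose s : ℝ) * g (s + 1))
            = (-δ) ^ (w - v) * ((w - 1).choose (v - 1) : ℝ)
              * ((1 - δ ^ K) * m / (1 - δ ^ (K - v + 1))) := by
          intro v hv
          rw [Finset.mem_Icc] at hv
          rw [IH v (by omega) (by omega) (by omega)]
        -- E1 : x = -1
        have E1 := trinomial_sum g (-1) w (by omega)
        have hE1R : (∑ s ∈ Finset.range w,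
            ((w - 1).choose s : ℝ) * (1 + (-1)) ^ (w - 1 - s) * g (s + 1)) = g w := by
          rw [Finset.sum_eq_single_of_mem (w - 1) (Finset.mem_range.2 (by omega))]
          · rw [Nat.choose_self, Nat.cast_one, one_mul, Nat.sub_self, pow_zero, one_mul,
              show w - 1 + 1 = w from by omega]
          · intro s hs hsne
            rw [Finset.mem_range] at hs
            rw [show (1 : ℝ) + (-1) = 0 from by ring, zero_pow (show w - 1 - s ≠ 0 by omega),
              mul_zero, zero_mul]
        rw [hE1R, split, Finset.sum_congr rfl hIH1, Nat.sub_self, pow_zero, Nat.choose_self,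
          Nat.cast_one, one_mul, one_mul] at E1
        -- E2 : x = -δ
        have E2 := trinomial_sum g (-δ) w (by omega)
        rw [show (1 : ℝ) + (-δ) = 1 - δ from by ring, split, Finset.sum_congr rfl hIH2,
          Nat.sub_self, pow_zero, Nat.choose_self, Nat.cast_one, one_mul, one_mul] at E2
        have grecw := grec w h2 hwK
        -- combine
        have hterm : ∀ v ∈ Finset.Icc 1 (w - 1),
            δ ^ (K - w + 1) * ((-δ) ^ (w - v) * ((w - 1).choose (v - 1) : ℝ)
                * ((1 - δ ^ K) * m / (1 - δ ^ (K - v + 1))))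
              - (-1 : ℝ) ^ (w - v) * ((w - 1).choose (v - 1) : ℝ)
                * ((1 - δ ^ K) * m / (1 - δ ^ (K - v + 1)))
            = -((1 - δ ^ K) * m) * ((-1 : ℝ) ^ (w - v) * ((w - 1).choose (v - 1) : ℝ)) := by
          intro v hv
          rw [Finset.mem_Icc] at hv
          have hKv : (K - w + 1) + (w - v) = K - v + 1 := by omega
          have hnev : (1 : ℝ) - δ ^ (K - v + 1) ≠ 0 :=
            ne_of_gt (by linarith [hpow_lt (K - v + 1) (by omega)])
          have e : δ ^ (K - w + 1) * (-δ) ^ (w - v) = (-1 : ℝ) ^ (w - v) * δ ^ (K - v + 1) := by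
            rw [neg_pow, ← hKv, pow_add]
            ring
          have hfv : (δ ^ (K - v + 1) - 1) * ((1 - δ ^ K) * m / (1 - δ ^ (K - v + 1)))
              = -((1 - δ ^ K) * m) := by
            field_simp
            ring
          linear_combination (((w - 1).choose (v - 1) : ℝ)
              * ((1 - δ ^ K) * m / (1 - δ ^ (K - v + 1)))) * e
            + ((-1 : ℝ) ^ (w - v) * ((w - 1).choose (v - 1) : ℝ)) * hfv
        have hD : δ ^ (K - w + 1) * (∑ v ∈ Finset.Icc 1 (w - 1),
              (-δ) ^ (w - v) * ((w - 1).choose (v - 1) : ℝ)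
                * ((1 - δ ^ K) * m / (1 - δ ^ (K - v + 1))))
            - (∑ v ∈ Finset.Icc 1 (w - 1),
              (-1 : ℝ) ^ (w - v) * ((w - 1).choose (v - 1) : ℝ)
                * ((1 - δ ^ K) * m / (1 - δ ^ (K - v + 1))))
            = (1 - δ ^ K) * m := by
          rw [Finset.mul_sum, ← Finset.sum_sub_distrib, Finset.sum_congr rfl hterm,
            ← Finset.mul_sum, alt_sum w h2]
          ring
        rw [eq_div_iff (ne_of_gt hpa)]
        linear_combination hD + E1 - δ ^ (K - w + 1) * E2 + grecw
  -- conclusion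
  have hW1 : 1 ≤ W.card := Finset.card_pos.2 ⟨k, hkW⟩
  have hstep : ∀ I ∈ W.powerset.filter (fun I => k ∈ I), μ I = g I.card := by
    intro I hIm
    simp only [Finset.mem_filter, Finset.mem_powerset] at hIm
    exact hsym I.card I rfl (Finset.card_pos.2 ⟨k, hIm.2⟩)
  rw [Finset.sum_congr rfl hstep, count_subsets hkW (fun i => g i)]
  exact key W.card hW1 (hcard_le W)
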